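/- Let m ≥ 2 be divisible by an odd prime p. Then the power graph of the dicyclic group Q_{4m} is not isomorphic to the commuting graph of the dihedral group D_{2·2m}: the power graph of Q_{4m} has strictly fewer edges than the commuting graph of D_{2·2m}, which has exactly m(2m - 1) + 5m edges. -/

import Mathlib

/-- The power graph of a group: distinct `x`, `y` are adjacent iff one is a power of the other. -/
def powerGraph (G : Type*) [Group G] : SimpleGraph G where
  Adj x y := x ≠ y ∧ ((∃ k : ℤ, x = y ^ k) ∨ (∃ k : ℤ, y = x ^ k))
  symm := by
    constructor; rintro x y ⟨hne, h | h⟩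
    · exact ⟨hne.symm, Or.inr h⟩
    · exact ⟨hne.symm, Or.inl h⟩
  loopless := by constructor; rintro x ⟨hne, -⟩; exact hne rfl

/-- The commuting graph of a group: distinct `x`, `y` are adjacent iff they commute. -/
def commutingGraph (G : Type*) [Group G] : SimpleGraph G where
  Adj x y := x ≠ y ∧ x * y = y * x
  symm := by constructor; rintro x y ⟨hne, h⟩; exact ⟨hne.symm, h.symm⟩
  loopless := by constructor; rintro x ⟨hne, -⟩; exact hne rfl

/-- The enhanced power graph of a group: distinct `x`, `y` are adjacent iff `⟨x, y⟩` is cyclic. -/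
def enhancedPowerGraph (G : Type*) [Group G] : SimpleGraph G where
  Adj x y := x ≠ y ∧ IsCyclic ↥(Subgroup.closure {x, y})
  symm := by constructor; rintro x y ⟨hne, h⟩; rw [Set.pair_comm] at h; exact ⟨hne.symm, h⟩
  loopless := by constructor; rintro x ⟨hne, -⟩; exact hne rfl

open DihedralGroup QuaternionGroup


instance (G : Type*) [Group G] [DecidableEq G] : DecidableRel (commutingGraph G).Adj :=
  fun x y => inferInstanceAs (Decidable (x ≠ y ∧ x * y = y * x))

lemma two_mul_eq_zero_iff (m : ℕ) (hm : 1 ≤ m) (j : ZMod (2*m)) :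
    2 * j = 0 ↔ j = 0 ∨ j = (m : ZMod (2*m)) := by
  haveI : NeZero (2*m) := ⟨by omega⟩
  constructor
  · intro h
    have hj : ((j.val : ℕ) : ZMod (2*m)) = j := ZMod.natCast_rightInverse j
    have h2 : ((2*j.val : ℕ) : ZMod (2*m)) = 0 := by push_cast; rw [hj]; exact h
    rw [ZMod.natCast_eq_zero_iff] at h2
    have hlt : j.val < 2*m := ZMod.val_lt j
    have : j.val = 0 ∨ j.val = m := by
      rcases h2 with ⟨c, hc⟩
      have hc2 : c < 2 := by nlinarith
      interval_cases c <;> omega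
    rcases this with h0 | h0
    · left; rw [← hj, h0, Nat.cast_zero]
    · right; rw [← hj, h0]
  · rintro (rfl | rfl)
    · simp
    · have : ((2*m : ℕ) : ZMod (2*m)) = 0 := ZMod.natCast_self _
      push_cast at this ⊢
      rw [this]

lemma m_ne_zero (m : ℕ) (hm : 1 ≤ m) : (m : ZMod (2*m)) ≠ 0 := by
  haveI : NeZero (2*m) := ⟨by omega⟩
  intro h
  rw [ZMod.natCast_eq_zero_iff] at h
  have := Nat.le_of_dvd (by omega) h
  omega

section Dihedral
variable (m : ℕ) [NeZero (2*m)]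

lemma neighborFinset_sr (hm : 2 ≤ m) (i : ZMod (2*m)) :
    (commutingGraph (DihedralGroup (2*m))).neighborFinset (sr i) =
      {DihedralGroup.r 0, DihedralGroup.r (m : ZMod (2*m)),
        DihedralGroup.sr (i + (m : ZMod (2*m)))} := by
  have hm2 : 2 * (m : ZMod (2*m)) = 0 :=
    (two_mul_eq_zero_iff m (by omega) (m : ZMod (2*m))).mpr (Or.inr rfl)
  ext x
  rw [SimpleGraph.mem_neighborFinset]
  cases x with
  | r j =>
    show (sr i ≠ r j ∧ sr i * r j = r j * sr i) ↔ _
    simp only [sr_mul_r, r_mul_sr, ne_eq, reduceCtorEq, not_false_eq_true, true_and, sr.injEq,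
      Finset.mem_insert, Finset.mem_singleton, r.injEq, or_false]
    constructor
    · intro h
      exact (two_mul_eq_zero_iff m (by omega) j).mp (by linear_combination h)
    · rintro (rfl | rfl)
      · simp
      · linear_combination hm2
  | sr j =>
    show (sr i ≠ sr j ∧ sr i * sr j = sr j * sr i) ↔ _
    simp only [sr_mul_sr, ne_eq, sr.injEq, Finset.mem_insert, Finset.mem_singleton, reduceCtorEq,
      false_or, r.injEq]
    constructor
    · rintro ⟨hne, hc⟩
      rcases (two_mul_eq_zero_iff m (by omega) (j - i)).mp (by linear_combination hc) with h0 | h0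
      · exact absurd (by linear_combination h0 : j = i) (fun h => hne h.symm)
      · linear_combination h0
    · rintro rfl
      constructor
      · intro h
        exact m_ne_zero m (by omega) (by linear_combination -h)
      · linear_combination hm2

lemma degree_sr (hm : 2 ≤ m) (i : ZMod (2*m)) :
    (commutingGraph (DihedralGroup (2*m))).degree (sr i) = 3 := by
  rw [SimpleGraph.degree, neighborFinset_sr m hm i]
  rw [Finset.card_insert_of_notMem, Finset.card_insert_of_notMem, Finset.card_singleton]
  · simp
  · simp only [Finset.mem_insert, Finset.mem_singleton, r.injEq, reduceCtorEq, or_false]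
    exact fun h => m_ne_zero m (by omega) h.symm

lemma neighborFinset_r_central (hm : 2 ≤ m) (i : ZMod (2*m)) (hi : 2 * i = 0) :
    (commutingGraph (DihedralGroup (2*m))).neighborFinset (r i) =
      Finset.univ.erase (r i) := by
  ext x
  rw [SimpleGraph.mem_neighborFinset, Finset.mem_erase]
  cases x with
  | r j =>
    show (r i ≠ r j ∧ r i * r j = r j * r i) ↔ _
    simp only [r_mul_r, add_comm, ne_eq, r.injEq, Finset.mem_univ, and_true, true_and]
    tauto
  | sr j =>
    show (r i ≠ sr j ∧ r i * sr j = sr j * r i) ↔ _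
    simp only [r_mul_sr, sr_mul_r, ne_eq, reduceCtorEq, not_false_eq_true, true_and, sr.injEq,
      Finset.mem_univ, and_true]
    constructor
    · intro _; simp
    · intro _; linear_combination -hi

lemma neighborFinset_r_noncentral (hm : 2 ≤ m) (i : ZMod (2*m)) (hi : ¬ 2 * i = 0) :
    (commutingGraph (DihedralGroup (2*m))).neighborFinset (r i) =
      (Finset.univ.image DihedralGroup.r).erase (r i) := by
  ext x
  rw [SimpleGraph.mem_neighborFinset, Finset.mem_erase]
  cases x with
  | r j =>
    show (r i ≠ r j ∧ r i * r j = r j * r i) ↔ _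
    simp only [r_mul_r, add_comm, ne_eq, r.injEq, and_true, true_and, Finset.mem_image,
      Finset.mem_univ, true_and]
    constructor
    · intro h; exact ⟨fun h2 => h h2.symm, ⟨j, rfl⟩⟩
    · rintro ⟨h, -⟩; exact fun h2 => h (by rw [h2])
  | sr j =>
    show (r i ≠ sr j ∧ r i * sr j = sr j * r i) ↔ _
    simp only [r_mul_sr, sr_mul_r, ne_eq, reduceCtorEq, not_false_eq_true, true_and, sr.injEq,
      Finset.mem_image, Finset.mem_univ, true_and, and_false, iff_false]
    constructor
    · intro h
      exact absurd (by linear_combination -h) hi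
    · rintro ⟨a, h⟩
      exact h.elim

lemma degree_r (hm : 2 ≤ m) (i : ZMod (2*m)) :
    (commutingGraph (DihedralGroup (2*m))).degree (r i) =
      if 2 * i = 0 then 4 * m - 1 else 2 * m - 1 := by
  by_cases hi : 2 * i = 0
  · rw [if_pos hi, SimpleGraph.degree, neighborFinset_r_central m hm i hi,
      Finset.card_erase_of_mem (Finset.mem_univ _), Finset.card_univ, DihedralGroup.card]
    omega
  · rw [if_neg hi, SimpleGraph.degree, neighborFinset_r_noncentral m hm i hi,
      Finset.card_erase_of_mem, Finset.card_image_of_injective _ (fun a b h => by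
        injection h), Finset.card_univ, ZMod.card]
    exact Finset.mem_image_of_mem _ (Finset.mem_univ _)


lemma card_edges_dihedral (hm : 2 ≤ m) :
    Nat.card (commutingGraph (DihedralGroup (2*m))).edgeSet = m * (2*m - 1) + 5*m := by
  set G := commutingGraph (DihedralGroup (2*m)) with hG
  let e : ZMod (2*m) ⊕ ZMod (2*m) ≃ DihedralGroup (2*m) :=
    { toFun := Sum.elim DihedralGroup.r DihedralGroup.sr
      invFun := fun x => match x with
        | .r j => Sum.inl j
        | .sr j => Sum.inr j
      left_inv := by rintro (x | x) <;> rfl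
      right_inv := by rintro (x | x) <;> rfl }
  have hdeg := SimpleGraph.sum_degrees_eq_twice_card_edges G
  have hsplit : ∑ v : DihedralGroup (2*m), G.degree v
      = ∑ i : ZMod (2*m) ⊕ ZMod (2*m), G.degree (e i) := (Equiv.sum_comp e fun v => G.degree v).symm
  rw [hsplit, Fintype.sum_sum_type] at hdeg
  have h2 : ∑ i : ZMod (2*m), G.degree (e (Sum.inr i)) = 2*m*3 := by
    have h3 : ∀ i : ZMod (2*m), G.degree (e (Sum.inr i)) = 3 := fun i => degree_sr m hm i
    rw [Finset.sum_congr rfl (fun i _ => h3 i), Finset.sum_const,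
      Finset.card_univ, ZMod.card, smul_eq_mul]
  have hfil : (Finset.univ.filter (fun i : ZMod (2*m) => 2*i = 0)).card = 2 := by
    have : Finset.univ.filter (fun i : ZMod (2*m) => 2*i = 0) = {0, (m : ZMod (2*m))} := by
      ext j
      simp [two_mul_eq_zero_iff m (by omega) j]
    rw [this, Finset.card_insert_of_notMem (by
      simp only [Finset.mem_singleton]
      exact fun h => m_ne_zero m (by omega) h.symm), Finset.card_singleton]
  have hfil2 : (Finset.univ.filter (fun i : ZMod (2*m) => ¬ 2*i = 0)).card = 2*m - 2 := by
    have := Finset.card_filter_add_card_filter_not (s := (Finset.univ : Finset (ZMod (2*m))))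
      (p := fun i => 2*i = 0)
    rw [Finset.card_univ, ZMod.card] at this
    omega
  have h1 : ∑ i : ZMod (2*m), G.degree (e (Sum.inl i)) =
      2*(4*m-1) + (2*m-2)*(2*m-1) := by
    have h3 : ∀ i : ZMod (2*m), G.degree (e (Sum.inl i)) =
        if 2 * i = 0 then 4 * m - 1 else 2 * m - 1 := fun i => degree_r m hm i
    rw [Finset.sum_congr rfl (fun i _ => h3 i), Finset.sum_ite, Finset.sum_const,
      Finset.sum_const, hfil, hfil2, smul_eq_mul, smul_eq_mul]
  rw [h1, h2] at hdeg
  have hcard : Nat.card G.edgeSet = G.edgeFinset.card := by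
    rw [Nat.card_eq_fintype_card, SimpleGraph.edgeFinset_card]
  rw [hcard]
  obtain ⟨k, rfl⟩ : ∃ k, m = k + 2 := ⟨m - 2, by omega⟩
  have e1 : 4*(k+2)-1 = 4*k+7 := by omega
  have e2 : 2*(k+2)-2 = 2*k+2 := by omega
  have e3 : 2*(k+2)-1 = 2*k+3 := by omega
  rw [e1, e2, e3] at hdeg
  rw [e3]
  have key : 2 * ((k+2) * (2*k+3) + 5*(k+2)) = 2 * G.edgeFinset.card := by
    rw [← hdeg]; ring
  omega

end Dihedral


lemma natCast_inj_zmod (m a b : ℕ) (ha : a < 2*m) (hb : b < 2*m) (h : (a : ZMod (2*m)) = b) :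
    a = b := by
  haveI : NeZero (2*m) := ⟨by omega⟩
  have := congrArg ZMod.val h
  rwa [ZMod.val_cast_of_lt ha, ZMod.val_cast_of_lt hb] at this

section Quaternion
variable {m : ℕ}

lemma a_pow_nat (k : ℕ) (i : ZMod (2*m)) :
    (QuaternionGroup.a i) ^ k = QuaternionGroup.a ((k : ZMod (2*m)) * i) := by
  induction k with
  | zero => rw [pow_zero, Nat.cast_zero, zero_mul]; rfl
  | succ n ih =>
    rw [pow_succ, ih, a_mul_a]
    congr 1
    push_cast
    ring

lemma a_inv (i : ZMod (2*m)) : (QuaternionGroup.a i)⁻¹ = QuaternionGroup.a (-i) := rfl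

lemma a_zpow (k : ℤ) (i : ZMod (2*m)) :
    (QuaternionGroup.a i) ^ k = QuaternionGroup.a ((k : ZMod (2*m)) * i) := by
  cases k with
  | ofNat n => rw [Int.ofNat_eq_coe, zpow_natCast, a_pow_nat]; norm_num
  | negSucc n =>
    rw [zpow_negSucc, a_pow_nat, a_inv]
    congr 1
    push_cast
    ring

lemma pow_ssubset_com (hm : 2 ≤ m) (p : ℕ) (hp : p.Prime) (hodd : Odd p) (hdvd : p ∣ m) :
    (powerGraph (QuaternionGroup m)).edgeSet ⊂ (commutingGraph (QuaternionGroup m)).edgeSet := by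
  constructor
  · intro e he
    induction e with
    | _ x y =>
      rw [SimpleGraph.mem_edgeSet] at he ⊢
      obtain ⟨hne, hk⟩ := he
      refine ⟨hne, ?_⟩
      rcases hk with ⟨k, rfl⟩ | ⟨k, rfl⟩
      · exact (Commute.zpow_self y k).eq
      · exact (Commute.self_zpow x k).eq
  · intro hsub
    -- witness
    set t := m / p with htdef
    have ht : p * t = m := Nat.mul_div_cancel' hdvd
    have hp3 : 3 ≤ p := by
      have := hp.two_le
      rcases hodd with ⟨c, hc⟩
      omega
    have ht1 : 1 ≤ t := by nlinarith
    have h2t : 2 * t < m := by nlinarith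
    have htz : (t : ℤ) ≠ 0 := by positivity
    set u : QuaternionGroup m := QuaternionGroup.a ((2*t : ℕ) : ZMod (2*m)) with hu
    set v : QuaternionGroup m := QuaternionGroup.a ((m : ℕ) : ZMod (2*m)) with hv
    have hne : u ≠ v := by
      intro h
      rw [hu, hv, QuaternionGroup.a.injEq] at h
      have := natCast_inj_zmod m (2*t) m (by omega) (by omega) h
      omega
    have hcom : s(u, v) ∈ (commutingGraph (QuaternionGroup m)).edgeSet := by
      rw [SimpleGraph.mem_edgeSet]
      exact ⟨hne, by rw [hu, hv, a_mul_a, a_mul_a, add_comm]⟩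
    have hpow : s(u, v) ∉ (powerGraph (QuaternionGroup m)).edgeSet := by
      rw [SimpleGraph.mem_edgeSet]
      rintro ⟨-, ⟨k, hk⟩ | ⟨k, hk⟩⟩
      · -- u = v ^ k : a (2t) = a (k * m)
        rw [hv, a_zpow, hu, QuaternionGroup.a.injEq] at hk
        have hz : (((2*t : ℕ) : ℤ) : ZMod (2*m)) = ((k * m : ℤ) : ZMod (2*m)) := by
          push_cast at hk ⊢
          rw [hk]
        rw [ZMod.intCast_eq_intCast_iff] at hz
        obtain ⟨s, hs⟩ := hz.dvd
        push_cast at hs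
        have hmz : (m : ℤ) = (p : ℤ) * t := by exact_mod_cast ht.symm
        rw [hmz] at hs
        have hkey : (t : ℤ) * ((k * p - 2) - 2 * p * s) = 0 := by linear_combination hs
        have h0 : (k * (p:ℤ) - 2) - 2 * p * s = 0 := by
          rcases mul_eq_zero.mp hkey with h | h
          · exact absurd h htz
          · exact h
        have hdvd2 : (p : ℤ) ∣ 2 := ⟨k - 2 * s, by linarith⟩
        have : p ∣ 2 := by exact_mod_cast hdvd2
        have := Nat.le_of_dvd (by norm_num) this
        omega
      · -- v = u ^ k : a m = a (k * 2t)
        rw [hu, a_zpow, hv, QuaternionGroup.a.injEq] at hk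
        have hz : (((m : ℕ) : ℤ) : ZMod (2*m)) = ((k * (2*t) : ℤ) : ZMod (2*m)) := by
          push_cast at hk ⊢
          rw [hk]
        rw [ZMod.intCast_eq_intCast_iff] at hz
        obtain ⟨s, hs⟩ := hz.dvd
        push_cast at hs
        have hmz : (m : ℤ) = (p : ℤ) * t := by exact_mod_cast ht.symm
        rw [hmz] at hs
        have hkey : (t : ℤ) * ((2 * k - p) - 2 * p * s) = 0 := by linear_combination hs
        have h0 : (2 * k - (p:ℤ)) - 2 * p * s = 0 := by
          rcases mul_eq_zero.mp hkey with h | h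
          · exact absurd h htz
          · exact h
        have heven : (2 : ℤ) ∣ (p : ℤ) := ⟨k - p * s, by linarith⟩
        have : 2 ∣ p := by exact_mod_cast heven
        rcases hodd with ⟨c, hc⟩
        omega
    exact hpow (hsub hcom)

end Quaternion

/-- the natural equiv between `Q_{4m}` and `D_{4m}` -/
def qdEquiv (m : ℕ) : QuaternionGroup m ≃ DihedralGroup (2*m) where
  toFun x := match x with
    | .a i => .r i
    | .xa i => .sr i
  invFun x := match x with
    | .r i => .a i
    | .sr i => .xa i
  left_inv := by rintro (i | i) <;> rfl
  right_inv := by rintro (i | i) <;> rfl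

def qdIso (m : ℕ) :
    commutingGraph (QuaternionGroup m) ≃g commutingGraph (DihedralGroup (2*m)) where
  toEquiv := qdEquiv m
  map_rel_iff' := by
    rintro (i | i) (j | j) <;>
      simp only [qdEquiv, Equiv.coe_fn_mk, commutingGraph, SimpleGraph.Adj] <;>
      constructor <;> rintro ⟨h1, h2⟩ <;>
      refine ⟨by simp_all, ?_⟩ <;>
      simp_all <;>
      first
        | rw [add_sub_assoc, add_sub_assoc, h2]
        | (rw [add_sub_assoc, add_sub_assoc] at h2; exact add_left_cancel h2)


/-- If an odd prime divides m (m ≥ 2), then the power graph of `Q_{4m}` has strictly fewer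
edges than the commuting graph of `D_{2·2m}` (which has `m(2m-1) + 5m` edges), so the two
graphs are not isomorphic. -/
theorem stmt16 (m : ℕ) (hm : 2 ≤ m) (p : ℕ) (hp : p.Prime) (hodd : Odd p) (hdvd : p ∣ m) :
    Nat.card (powerGraph (QuaternionGroup m)).edgeSet < m * (2 * m - 1) + 5 * m ∧
      Nat.card (commutingGraph (DihedralGroup (2 * m))).edgeSet = m * (2 * m - 1) + 5 * m ∧
      ¬ Nonempty (powerGraph (QuaternionGroup m) ≃g commutingGraph (DihedralGroup (2 * m))) := by
  haveI : NeZero (2 * m) := ⟨by omega⟩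
  haveI : NeZero m := ⟨by omega⟩
  have hD := card_edges_dihedral m hm
  have hQD : Nat.card (commutingGraph (QuaternionGroup m)).edgeSet
      = Nat.card (commutingGraph (DihedralGroup (2 * m))).edgeSet :=
    Nat.card_congr (qdIso m).mapEdgeSet
  have hlt : Nat.card (powerGraph (QuaternionGroup m)).edgeSet
      < Nat.card (commutingGraph (QuaternionGroup m)).edgeSet := by
    rw [Nat.card_coe_set_eq, Nat.card_coe_set_eq]
    exact Set.ncard_lt_ncard (pow_ssubset_com hm p hp hodd hdvd) (Set.toFinite _)
  have h1 : Nat.card (powerGraph (QuaternionGroup m)).edgeSet < m * (2 * m - 1) + 5 * m :=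
    hlt.trans_eq (hQD.trans hD)
  refine ⟨h1, hD, ?_⟩
  rintro ⟨e⟩
  have := Nat.card_congr e.mapEdgeSet
  omega
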